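/- Let K = ℚ(α) be a totally real cubic number field, where α is an algebraic integer with conjugates α, α', α'', let Δ = disc(1, α, α²) > 0, and let η₁, η₂ ∈ O_K^× be multiplicatively independent units. For a unit ε and a real embedding, set γ(ε) = |ε| if |ε| ≥ 1 and γ(ε) = |ε|⁻¹ otherwise, and write γ₁ = γ(η₁), γ₂ = γ(η₂) for the first embedding and γ₁', γ₂' for the second embedding. Then for every ξ ∈ K with |N_{K/ℚ}(ξ)| = k > 0 there exists a unit ε in the subgroup generated by η₁ and η₂ such that, writing ξ·ε = a + bα + cα² with a, b, c ∈ ℚ, one has |c| ≤ 3·(k·γ₁γ₂γ₁'γ₂'/Δ)^{1/3}. -/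

import Mathlib

open NumberField

/-- `gammaVal v` is `|v|` if `|v| ≥ 1` and `|v|⁻¹` otherwise. -/
noncomputable def gammaVal (v : ℝ) : ℝ := if 1 ≤ |v| then |v| else |v|⁻¹

lemma gammaVal_eq_exp {v : ℝ} (hv : v ≠ 0) :
    gammaVal v = Real.exp (abs (Real.log (abs v))) := by
  have habs : 0 < |v| := abs_pos.mpr hv
  unfold gammaVal
  rcases le_or_gt 1 |v| with h | h
  · rw [if_pos h, abs_of_nonneg (Real.log_nonneg h), Real.exp_log habs]
  · rw [if_neg (not_le.mpr h), abs_of_neg (Real.log_neg habs h), Real.exp_neg,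
      Real.exp_log habs]


/-- Rounding lemma: hit the triangle. -/
lemma aux_exists_int_shift (u0 u1 u2 w0 w1 w2 x0 x1 x2 t0 t1 t2 : ℝ)
    (hu : u0 + u1 + u2 = 0) (hw : w0 + w1 + w2 = 0)
    (hdet : u0 * w1 - u1 * w0 ≠ 0)
    (ht : x0 + x1 + x2 + (|u0| + |u1| + |w0| + |w1|) ≤ t0 + t1 + t2) :
    ∃ m n : ℤ, x0 + m * u0 + n * w0 ≤ t0 ∧ x1 + m * u1 + n * w1 ≤ t1 ∧
      x2 + m * u2 + n * w2 ≤ t2 := by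
  set h0 : ℝ := (|u0| + |w0|) / 2 with hh0
  set h1 : ℝ := (|u1| + |w1|) / 2 with hh1
  set P0 : ℝ := t0 - h0 - x0 with hP0
  set P1 : ℝ := t1 - h1 - x1 with hP1
  set a : ℝ := (P0 * w1 - P1 * w0) / (u0 * w1 - u1 * w0) with ha
  set c : ℝ := (u0 * P1 - u1 * P0) / (u0 * w1 - u1 * w0) with hc
  have key0 : a * u0 + c * w0 = P0 := by
    rw [ha, hc, div_mul_eq_mul_div, div_mul_eq_mul_div, ← add_div, div_eq_iff hdet]; ring
  have key1 : a * u1 + c * w1 = P1 := by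
    rw [ha, hc, div_mul_eq_mul_div, div_mul_eq_mul_div, ← add_div, div_eq_iff hdet]; ring
  have r1 : |(round a : ℝ) - a| ≤ 1 / 2 := by
    rw [abs_sub_comm]; exact abs_sub_round a
  have r2 : |(round c : ℝ) - c| ≤ 1 / 2 := by
    rw [abs_sub_comm]; exact abs_sub_round c
  have bnd : ∀ v : ℝ, |((round a : ℝ) - a) * v| ≤ |v| / 2 ∧
      |((round c : ℝ) - c) * v| ≤ |v| / 2 := by
    intro v
    constructor <;> rw [abs_mul] <;>
      [ (calc |(round a : ℝ) - a| * |v| ≤ (1/2) * |v| :=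
            mul_le_mul_of_nonneg_right r1 (abs_nonneg v)
          _ = |v| / 2 := by ring) ;
        (calc |(round c : ℝ) - c| * |v| ≤ (1/2) * |v| :=
            mul_le_mul_of_nonneg_right r2 (abs_nonneg v)
          _ = |v| / 2 := by ring) ]
  obtain ⟨A1, A2⟩ := And.intro (abs_le.mp (bnd u0).1) (abs_le.mp (bnd w0).2)
  obtain ⟨A3, A4⟩ := And.intro (abs_le.mp (bnd u1).1) (abs_le.mp (bnd w1).2)
  have e0 : x0 + (round a : ℝ) * u0 + (round c : ℝ) * w0
      = t0 - h0 + (((round a : ℝ) - a) * u0 + ((round c : ℝ) - c) * w0) := by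
    linear_combination key0
  have e1 : x1 + (round a : ℝ) * u1 + (round c : ℝ) * w1
      = t1 - h1 + (((round a : ℝ) - a) * u1 + ((round c : ℝ) - c) * w1) := by
    linear_combination key1
  have hu2 : u2 = -u0 - u1 := by linarith
  have hw2 : w2 = -w0 - w1 := by linarith
  refine ⟨round a, round c, ?_, ?_, ?_⟩
  · linarith [A1.2, A2.2]
  · linarith [A3.2, A4.2]
  · rw [hu2, hw2]; nlinarith [A1.1, A2.1, A3.1, A4.1, e0, e1]


lemma aux_infinite_pairs (l δ : ℝ) (hδ : 0 < δ) :
    {p : ℤ × ℤ | |(p.1 : ℝ) + (p.2 : ℝ) * l| ≤ δ}.Infinite := by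
  set M : ℕ := ⌈1/δ⌉₊ + 1 with hM
  have hMpos : (0:ℝ) < M := by positivity
  have hMδ : 1 / (M:ℝ) ≤ δ := by
    rw [div_le_iff₀ hMpos]
    have h1 : 1/δ ≤ (⌈1/δ⌉₊ : ℝ) := Nat.le_ceil _
    have : 1/δ ≤ (M:ℝ) := by
      rw [hM]; push_cast; linarith
    calc (1:ℝ) = δ * (1/δ) := by field_simp
    _ ≤ δ * M := by nlinarith
  -- bucket map
  have hfr : ∀ n : ℕ, (0:ℝ) ≤ Int.fract ((n:ℝ) * l) * M ∧ Int.fract ((n:ℝ) * l) * M < M := by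
    intro n
    constructor
    · exact mul_nonneg (Int.fract_nonneg _) hMpos.le
    · have := Int.fract_lt_one ((n:ℝ) * l)
      nlinarith
  let f : ℕ → Fin M := fun n => ⟨⌊Int.fract ((n:ℝ) * l) * M⌋₊, by
    have := (hfr n).2
    exact_mod_cast Nat.floor_lt (hfr n).1 |>.mpr (by exact_mod_cast this)⟩
  obtain ⟨y, hy⟩ := Finite.exists_infinite_fiber f
  have hyS : (f ⁻¹' {y}).Infinite := Set.infinite_coe_iff.mp hy
  -- all elements of fiber have fract in interval of length 1/M
  have hclose : ∀ m n : ℕ, f m = f n →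
      |Int.fract ((m:ℝ) * l) - Int.fract ((n:ℝ) * l)| ≤ δ := by
    intro m n hmn
    have h1 : (⌊Int.fract ((m:ℝ) * l) * M⌋₊ : ℝ) ≤ Int.fract ((m:ℝ) * l) * M :=
      Nat.floor_le (hfr m).1
    have h2 : Int.fract ((m:ℝ) * l) * M < ⌊Int.fract ((m:ℝ) * l) * M⌋₊ + 1 :=
      Nat.lt_floor_add_one _
    have h3 : (⌊Int.fract ((n:ℝ) * l) * M⌋₊ : ℝ) ≤ Int.fract ((n:ℝ) * l) * M :=
      Nat.floor_le (hfr n).1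
    have h4 : Int.fract ((n:ℝ) * l) * M < ⌊Int.fract ((n:ℝ) * l) * M⌋₊ + 1 :=
      Nat.lt_floor_add_one _
    have heq : ⌊Int.fract ((m:ℝ) * l) * M⌋₊ = ⌊Int.fract ((n:ℝ) * l) * M⌋₊ := by
      have := congrArg Fin.val hmn
      simpa [f] using this
    rw [heq] at h1 h2
    rw [abs_le]
    constructor <;> rw [div_le_iff₀ hMpos] at hMδ <;> nlinarith
  obtain ⟨n0, hn0⟩ := hyS.nonempty
  set S' := (f ⁻¹' {y}) ∩ {n | n0 < n} with hS'
  have hS'inf : S'.Infinite := ((hyS.diff (Set.finite_Iic n0)).mono (by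
    intro x hx
    simp only [Set.mem_diff, Set.mem_Iic, not_le] at hx
    exact ⟨hx.1, hx.2⟩))
  set g : ℕ → ℤ × ℤ := fun n => (⌊(n0:ℝ) * l⌋ - ⌊(n:ℝ) * l⌋, (n:ℤ) - (n0:ℤ)) with hg
  have hginj : Function.Injective g := by
    intro m n hmn
    have := congrArg Prod.snd hmn
    simp only [g] at this
    omega
  apply Set.Infinite.mono (s := g '' S')
  · rintro _ ⟨n, hn, rfl⟩
    simp only [Set.mem_setOf_eq]
    have hfn : f n = y := hn.1
    have hfn0 : f n0 = y := hn0
    have hc := hclose n n0 (hfn.trans hfn0.symm)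
    have : ((⌊(n0:ℝ) * l⌋ - ⌊(n:ℝ) * l⌋ : ℤ) : ℝ) + (((n:ℤ) - (n0:ℤ) : ℤ) : ℝ) * l
        = Int.fract ((n:ℝ) * l) - Int.fract ((n0:ℝ) * l) := by
      unfold Int.fract
      push_cast
      ring
    rw [this]
    exact hc
  · exact hS'inf.image (hginj.injOn)

set_option maxHeartbeats 2000000 in
/-- In a totally real cubic field `K = ℚ(α)` with real embeddings `φ 0, φ 1, φ 2`
and multiplicatively independent units `η₁, η₂`, every `ξ ∈ K` of norm `±k ≠ 0`
can be multiplied by a unit `ε ∈ ⟨η₁, η₂⟩` so that, writing `ξ ε = a + b α + c α²`,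
one has `|c| ≤ 3 (k γ₁ γ₂ γ₁' γ₂' / Δ)^{1/3}` with `Δ = disc(1, α, α²)`. -/
theorem stmt_16 (K : Type*) [Field K] [NumberField K]
    (α : K) (hα : IsIntegral ℤ α) (hgen : Algebra.adjoin ℚ {α} = ⊤)
    (hdeg : Module.finrank ℚ K = 3)
    (φ : Fin 3 → (K →+* ℝ)) (hφ : Function.Injective φ)
    (hΔ : 0 < Algebra.discr ℚ ![1, α, α ^ 2])
    (η₁ η₂ : (𝓞 K)ˣ)
    (hind : ∀ m n : ℤ, η₁ ^ m * η₂ ^ n = 1 → m = 0 ∧ n = 0)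
    (b : Module.Basis (Fin 3) ℚ K) (hb : ∀ i : Fin 3, b i = α ^ (i : ℕ))
    (ξ : K) (k : ℝ) (hk : 0 < k) (hkξ : k = |(Algebra.norm ℚ ξ : ℝ)|) :
    ∃ ε : (𝓞 K)ˣ, ε ∈ Subgroup.closure ({η₁, η₂} : Set (𝓞 K)ˣ) ∧
      |(b.repr (ξ * ((ε : 𝓞 K) : K)) 2 : ℝ)| ≤
        3 * (k * (gammaVal (φ 0 ((η₁ : 𝓞 K) : K)) * gammaVal (φ 0 ((η₂ : 𝓞 K) : K)) *
              gammaVal (φ 1 ((η₁ : 𝓞 K) : K)) * gammaVal (φ 1 ((η₂ : 𝓞 K) : K))) /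
            ((Algebra.discr ℚ ![1, α, α ^ 2] : ℚ) : ℝ)) ^ ((1 : ℝ) / 3) := by
  classical
  -- embeddings into ℂ
  set e : Fin 3 → (K →+* ℂ) := fun i => Complex.ofRealHom.comp (φ i) with he
  have einj : Function.Injective e := by
    intro i j h
    apply hφ
    ext x
    have := congrArg (fun f : K →+* ℂ => f x) h
    simpa [he, Complex.ofReal_inj] using this
  have hbij : Function.Bijective e := by
    rw [Fintype.bijective_iff_injective_and_card]
    refine ⟨einj, ?_⟩
    rw [Fintype.card_fin, NumberField.Embeddings.card K ℂ, hdeg]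
  -- norm as product over the three real embeddings
  have hprod : ∀ x : K, |(Algebra.norm ℚ x : ℝ)| = ∏ i : Fin 3, |φ i x| := by
    intro x
    have h1 : (algebraMap ℚ ℂ) (Algebra.norm ℚ x) = ∏ σ : K →ₐ[ℚ] ℂ, σ x :=
      Algebra.norm_eq_prod_embeddings ℚ ℂ x
    have h2 : (∏ σ : K →+* ℂ, σ x) = ∏ σ : K →ₐ[ℚ] ℂ, σ x :=
      Fintype.prod_equiv (RingHom.equivRatAlgHom K ℂ) _ _ (fun σ => rfl)
    have h3 : (∏ i : Fin 3, e i x) = ∏ σ : K →+* ℂ, σ x :=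
      Fintype.prod_bijective e hbij _ _ (fun i => rfl)
    have h4 : (algebraMap ℚ ℂ) (Algebra.norm ℚ x) = ∏ i : Fin 3, ((φ i x : ℝ) : ℂ) := by
      rw [h1, ← h2, ← h3]; rfl
    have h5 := congrArg norm h4
    rw [norm_prod] at h5
    simp only [Complex.norm_real, Real.norm_eq_abs] at h5
    rw [← h5]
    rw [show (algebraMap ℚ ℂ) (Algebra.norm ℚ x) = ((Algebra.norm ℚ x : ℚ) : ℂ) from rfl]
    rw [show ((Algebra.norm ℚ x : ℚ) : ℂ) = (((Algebra.norm ℚ x : ℚ) : ℝ) : ℂ) by push_cast; ring]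
    rw [Complex.norm_real, Real.norm_eq_abs]
  -- nonvanishing
  have hφne : ∀ (i : Fin 3) (y : K), y ≠ 0 → φ i y ≠ 0 := fun i y hy =>
    (map_ne_zero (φ i)).mpr hy
  have hξne : ξ ≠ 0 := by
    intro h
    rw [h] at hkξ
    simp at hkξ
    exact absurd hkξ (ne_of_gt hk)
  -- log data
  set u : Fin 3 → ℝ := fun i => Real.log |φ i ((η₁ : 𝓞 K) : K)| with hu
  set w : Fin 3 → ℝ := fun i => Real.log |φ i ((η₂ : 𝓞 K) : K)| with hw
  have hη₁ne : ((η₁ : 𝓞 K) : K) ≠ 0 := RingOfIntegers.coe_ne_zero_iff.mpr (Units.ne_zero η₁)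
  have hη₂ne : ((η₂ : 𝓞 K) : K) ≠ 0 := RingOfIntegers.coe_ne_zero_iff.mpr (Units.ne_zero η₂)
  have habspos : ∀ (i : Fin 3) (y : K), y ≠ 0 → 0 < |φ i y| := fun i y hy =>
    abs_pos.mpr (hφne i y hy)
  have hsum_unit : ∀ η : (𝓞 K)ˣ,
      Real.log |φ 0 ((η : 𝓞 K) : K)| + Real.log |φ 1 ((η : 𝓞 K) : K)|
        + Real.log |φ 2 ((η : 𝓞 K) : K)| = 0 := by
    intro η
    have hne : ((η : 𝓞 K) : K) ≠ 0 := RingOfIntegers.coe_ne_zero_iff.mpr (Units.ne_zero η)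
    have h1 : |(Algebra.norm ℚ ((η : 𝓞 K) : K) : ℝ)| = 1 := by
      rw [show ((η : 𝓞 K) : K) = (η : K) from rfl]
      exact_mod_cast NumberField.Units.norm K η
    rw [hprod, Fin.prod_univ_three] at h1
    have e0 := habspos 0 _ hne
    have e1 := habspos 1 _ hne
    have e2 := habspos 2 _ hne
    rw [← Real.log_mul (by positivity) (by positivity), ← Real.log_mul (by positivity) (by positivity), h1, Real.log_one]
  have husum : u 0 + u 1 + u 2 = 0 := hsum_unit η₁
  have hwsum : w 0 + w 1 + w 2 = 0 := hsum_unit η₂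
  -- logs of unit powers
  have hlogp : ∀ (m n : ℤ) (i : Fin 3),
      Real.log |φ i (((η₁ ^ m * η₂ ^ n : (𝓞 K)ˣ) : 𝓞 K) : K)| = m * u i + n * w i := by
    intro m n i
    have hcoe : (((η₁ ^ m * η₂ ^ n : (𝓞 K)ˣ) : 𝓞 K) : K)
        = ((η₁ : 𝓞 K) : K) ^ m * ((η₂ : 𝓞 K) : K) ^ n := by
      rw [show (((η₁ ^ m * η₂ ^ n : (𝓞 K)ˣ) : 𝓞 K) : K) = ((η₁ ^ m * η₂ ^ n : (𝓞 K)ˣ) : K) from rfl,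
        NumberField.Units.coe_mul, NumberField.Units.coe_zpow, NumberField.Units.coe_zpow]
    have p1 : φ i ((η₁ : 𝓞 K) : K) ≠ 0 := hφne i _ hη₁ne
    have p2 : φ i ((η₂ : 𝓞 K) : K) ≠ 0 := hφne i _ hη₂ne
    rw [hcoe, map_mul, map_zpow₀, map_zpow₀, Real.log_abs,
      Real.log_mul (zpow_ne_zero m p1) (zpow_ne_zero n p2), Real.log_zpow, Real.log_zpow,
      hu, hw]
    simp only [Real.log_abs]
  -- injectivity of the pair map
  have hinj : Function.Injective
      (fun p : ℤ × ℤ => (((η₁ ^ p.1 * η₂ ^ p.2 : (𝓞 K)ˣ) : 𝓞 K) : K)) := by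
    intro p q hpq
    simp only at hpq
    have h1 : (η₁ ^ p.1 * η₂ ^ p.2 : (𝓞 K)ˣ) = η₁ ^ q.1 * η₂ ^ q.2 :=
      Units.ext (RingOfIntegers.coe_injective hpq)
    have h2 : η₁ ^ (p.1 - q.1) * η₂ ^ (p.2 - q.2) = 1 := by
      have hc : (η₁ ^ p.1 * η₂ ^ p.2) * (η₁ ^ q.1 * η₂ ^ q.2)⁻¹
          = η₁ ^ (p.1 - q.1) * η₂ ^ (p.2 - q.2) := by
        rw [mul_inv, mul_mul_mul_comm, ← zpow_neg, ← zpow_neg, ← zpow_add, ← zpow_add,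
          ← sub_eq_add_neg, ← sub_eq_add_neg]
      rw [← hc, h1, mul_inv_cancel]
    obtain ⟨e1, e2⟩ := hind _ _ h2
    have : p.1 = q.1 := by omega
    have : p.2 = q.2 := by omega
    exact Prod.ext (by omega) (by omega)
  -- contradiction machine from finiteness of bounded algebraic integers
  have hcontra : ∀ S : Set (ℤ × ℤ), S.Infinite →
      (∀ p ∈ S, ∀ i : Fin 3, |φ i (((η₁ ^ p.1 * η₂ ^ p.2 : (𝓞 K)ˣ) : 𝓞 K) : K)| ≤ 2) →
      False := by
    intro S hS hbd
    have hfin := NumberField.Embeddings.finite_of_norm_le K ℂ 2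
    have himg : (fun p : ℤ × ℤ => (((η₁ ^ p.1 * η₂ ^ p.2 : (𝓞 K)ˣ) : 𝓞 K) : K)) '' S ⊆
        {x : K | IsIntegral ℤ x ∧ ∀ σ : K →+* ℂ, ‖σ x‖ ≤ 2} := by
      rintro _ ⟨p, hp, rfl⟩
      refine ⟨RingOfIntegers.isIntegral_coe _, fun σ => ?_⟩
      obtain ⟨i, rfl⟩ := hbij.surjective σ
      rw [show (e i) _ = ((φ i (((η₁ ^ p.1 * η₂ ^ p.2 : (𝓞 K)ˣ) : 𝓞 K) : K) : ℝ) : ℂ) from rfl,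
        Complex.norm_real, Real.norm_eq_abs]
      exact hbd p hp i
    exact ((hfin.subset himg).not_infinite (hS.image hinj.injOn))
  -- nondegeneracy
  have hdetne : u 0 * w 1 - u 1 * w 0 ≠ 0 := by
    intro hdet0
    by_cases hcase : u 0 = 0 ∧ u 1 = 0
    · have hu2 : u 2 = 0 := by linarith [husum, hcase.1, hcase.2]
      have hui : ∀ i : Fin 3, u i = 0 := by
        intro i; fin_cases i; exacts [hcase.1, hcase.2, hu2]
      refine hcontra {p : ℤ × ℤ | p.2 = 0}
        (Set.infinite_of_injective_forall_mem
          (f := fun m : ℤ => ((m, 0) : ℤ × ℤ))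
          (fun a c h => by simpa using congrArg Prod.fst h) (fun m => rfl)) ?_
      rintro ⟨m, n⟩ hp i
      have hn : n = 0 := hp
      subst hn
      have hl := hlogp m 0 i
      rw [hui i] at hl
      simp only [Int.cast_zero, zero_mul, mul_zero, add_zero] at hl
      have habs := habspos i _ (RingOfIntegers.coe_ne_zero_iff.mpr
        (Units.ne_zero (η₁ ^ m * η₂ ^ (0:ℤ))))
      have : |φ i (((η₁ ^ m * η₂ ^ (0:ℤ) : (𝓞 K)ˣ) : 𝓞 K) : K)| = 1 := by
        have := Real.exp_log habs
        rw [hl] at this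
        simpa [Real.exp_zero] using this.symm
      rw [this]; norm_num
    · -- w is proportional to u : w i = l * u i
      set l : ℝ := if u 0 = 0 then w 1 / u 1 else w 0 / u 0 with hl
      have hprop01 : w 0 = l * u 0 ∧ w 1 = l * u 1 := by
        by_cases h0 : u 0 = 0
        · have h1 : u 1 ≠ 0 := fun h1 => hcase ⟨h0, h1⟩
          rw [hl, if_pos h0]
          constructor
          · have : u 1 * w 0 = 0 := by linear_combination -hdet0 + w 1 * h0
            have : w 0 = 0 := by
              rcases mul_eq_zero.mp this with h | h
              · exact absurd h h1
              · exact h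
            rw [this, h0]; ring
          · field_simp
        · rw [hl, if_neg h0]
          constructor
          · field_simp
          · rw [div_mul_eq_mul_div, eq_div_iff h0]
            linear_combination hdet0
      have hprop : ∀ i : Fin 3, w i = l * u i := by
        intro i
        fin_cases i
        · exact hprop01.1
        · exact hprop01.2
        · show w 2 = l * u 2
          linear_combination hwsum - l * husum - hprop01.1 - hprop01.2
      set B : ℝ := |u 0| + |u 1| + |u 2| + 1 with hB
      have hBpos : 0 < B := by positivity
      set δ : ℝ := Real.log 2 / B with hδdef
      have hδpos : 0 < δ := div_pos (Real.log_pos (by norm_num)) hBpos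
      refine hcontra {p : ℤ × ℤ | |(p.1 : ℝ) + (p.2 : ℝ) * l| ≤ δ}
        (aux_infinite_pairs l δ hδpos) ?_
      rintro ⟨m, n⟩ hp i
      have hp' : |(m : ℝ) + (n : ℝ) * l| ≤ δ := hp
      have hexp : Real.log |φ i (((η₁ ^ m * η₂ ^ n : (𝓞 K)ˣ) : 𝓞 K) : K)|
          = ((m : ℝ) + (n : ℝ) * l) * u i := by
        rw [hlogp m n i, hprop i]; ring
      have hub : |u i| ≤ B := by
        have h0 := abs_nonneg (u 0)
        have h1 := abs_nonneg (u 1)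
        have h2 := abs_nonneg (u 2)
        have e0 : |u 0| ≤ B := by rw [hB]; linarith
        have e1 : |u 1| ≤ B := by rw [hB]; linarith
        have e2 : |u 2| ≤ B := by rw [hB]; linarith
        fin_cases i
        exacts [e0, e1, e2]
      have hbound : Real.log |φ i (((η₁ ^ m * η₂ ^ n : (𝓞 K)ˣ) : 𝓞 K) : K)| ≤ Real.log 2 := by
        rw [hexp]
        calc ((m : ℝ) + (n : ℝ) * l) * u i ≤ |((m : ℝ) + (n : ℝ) * l) * u i| := le_abs_self _
        _ = |(m : ℝ) + (n : ℝ) * l| * |u i| := abs_mul _ _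
        _ ≤ δ * B := mul_le_mul hp' hub (abs_nonneg _) hδpos.le
        _ = Real.log 2 := by rw [hδdef]; field_simp
      have habs := habspos i _ (RingOfIntegers.coe_ne_zero_iff.mpr
        (Units.ne_zero (η₁ ^ m * η₂ ^ n)))
      calc |φ i (((η₁ ^ m * η₂ ^ n : (𝓞 K)ˣ) : 𝓞 K) : K)|
          = Real.exp (Real.log |φ i (((η₁ ^ m * η₂ ^ n : (𝓞 K)ˣ) : 𝓞 K) : K)|) :=
            (Real.exp_log habs).symm
        _ ≤ Real.exp (Real.log 2) := Real.exp_le_exp.mpr hbound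
        _ = 2 := Real.exp_log (by norm_num)
  -- discriminant and Vandermonde
  set Δℝ : ℝ := ((Algebra.discr ℚ ![1, α, α ^ 2] : ℚ) : ℝ) with hΔℝ
  have hΔpos : (0:ℝ) < Δℝ := by rw [hΔℝ]; exact_mod_cast hΔ
  set A : Fin 3 → ℝ := fun i => φ i α with hA
  set P : ℝ := (A 0 - A 1) * (A 1 - A 2) * (A 2 - A 0) with hP
  have hprod3 : ∀ f : Fin 3 → Fin 3 → ℂ,
      (∏ i : Fin 3, ∏ j ∈ Finset.Ioi i, f i j) = f 0 1 * f 0 2 * f 1 2 := by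
    intro f
    rw [Fin.prod_univ_three,
      show (Finset.Ioi (0 : Fin 3)) = {1, 2} by decide,
      show (Finset.Ioi (1 : Fin 3)) = {2} by decide,
      show (Finset.Ioi (2 : Fin 3)) = ∅ by decide,
      Finset.prod_insert (by decide), Finset.prod_singleton, Finset.prod_singleton,
      Finset.prod_empty]
    ring
  have hP2 : P ^ 2 = Δℝ := by
    set pb : PowerBasis ℚ K := { gen := α, dim := 3, basis := b, basis_eq_pow := hb } with hpb
    have hbe : (⇑b : Fin 3 → K) = ![1, α, α ^ 2] := by
      funext i
      fin_cases i <;> simp [hb]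
    set e' : Fin 3 ≃ (K →ₐ[ℚ] ℂ) :=
      (Equiv.ofBijective e hbij).trans (RingHom.equivRatAlgHom K ℂ) with he'
    have hd := Algebra.discr_powerBasis_eq_prod ℚ ℂ pb e'
    rw [hprod3] at hd
    have hgen : ∀ j : Fin 3, e' j pb.gen = ((A j : ℝ) : ℂ) := fun j => rfl
    rw [hgen 0, hgen 1, hgen 2] at hd
    have hdisc : algebraMap ℚ ℂ (Algebra.discr ℚ (⇑pb.basis)) = ((Δℝ : ℝ) : ℂ) := by
      show algebraMap ℚ ℂ (Algebra.discr ℚ (⇑b)) = _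
      rw [hbe, eq_ratCast, hΔℝ]
      push_cast
      ring
    rw [hdisc] at hd
    have : ((P ^ 2 : ℝ) : ℂ) = ((Δℝ : ℝ) : ℂ) := by
      rw [hd, hP]
      push_cast
      ring
    exact_mod_cast this
  have hPne : P ≠ 0 := by
    intro h
    rw [h] at hP2
    simp at hP2
    rw [← hP2] at hΔpos
    exact lt_irrefl _ hΔpos
  have hPabspos : (0:ℝ) < |P| := abs_pos.mpr hPne
  have h01 : A 0 - A 1 ≠ 0 := fun h => hPne (by rw [hP, h]; ring)
  have h12 : A 1 - A 2 ≠ 0 := fun h => hPne (by rw [hP, h]; ring)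
  have h20 : A 2 - A 0 ≠ 0 := fun h => hPne (by rw [hP, h]; ring)
  set d0 : ℝ := |A 1 - A 2| with hd0
  set d1 : ℝ := |A 0 - A 2| with hd1
  set d2 : ℝ := |A 0 - A 1| with hd2
  have hd0pos : 0 < d0 := abs_pos.mpr h12
  have hd1pos : 0 < d1 := abs_pos.mpr (fun h => h20 (by linarith [sub_eq_zero.mp h]))
  have hd2pos : 0 < d2 := abs_pos.mpr h01
  have hdfact : |P| = d2 * d0 * d1 := by
    rw [hP, abs_mul, abs_mul, hd2, hd0, hd1, abs_sub_comm (A 2) (A 0)]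
  -- Γ and its log
  set Γ : ℝ := gammaVal (φ 0 ((η₁ : 𝓞 K) : K)) * gammaVal (φ 0 ((η₂ : 𝓞 K) : K)) *
      gammaVal (φ 1 ((η₁ : 𝓞 K) : K)) * gammaVal (φ 1 ((η₂ : 𝓞 K) : K)) with hΓ
  have hΓexp : Γ = Real.exp (|u 0| + |w 0| + |u 1| + |w 1|) := by
    rw [hΓ, gammaVal_eq_exp (hφne 0 _ hη₁ne), gammaVal_eq_exp (hφne 0 _ hη₂ne),
      gammaVal_eq_exp (hφne 1 _ hη₁ne), gammaVal_eq_exp (hφne 1 _ hη₂ne),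
      ← Real.exp_add, ← Real.exp_add, ← Real.exp_add]
  have hΓpos : 0 < Γ := by rw [hΓexp]; exact Real.exp_pos _
  -- the targets
  set R : ℝ := (k * Γ * |P|) ^ ((1:ℝ)/3) with hR
  have hRpos : 0 < R := Real.rpow_pos_of_pos (by positivity) _
  set T0 : ℝ := R / d0 with hT0
  set T1 : ℝ := R / d1 with hT1
  set T2 : ℝ := R / d2 with hT2
  have hT0pos : 0 < T0 := div_pos hRpos hd0pos
  have hT1pos : 0 < T1 := div_pos hRpos hd1pos
  have hT2pos : 0 < T2 := div_pos hRpos hd2pos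
  set x0 : ℝ := Real.log |φ 0 ξ| with hx0
  set x1 : ℝ := Real.log |φ 1 ξ| with hx1
  set x2 : ℝ := Real.log |φ 2 ξ| with hx2
  have hsumx : x0 + x1 + x2 = Real.log k := by
    rw [hkξ, hprod, Fin.prod_univ_three]
    have e0 := habspos 0 _ hξne
    have e1 := habspos 1 _ hξne
    have e2 := habspos 2 _ hξne
    rw [Real.log_mul (by positivity) (by positivity),
      Real.log_mul (by positivity) (by positivity)]
  have hlogR : Real.log R = (1/3) * (Real.log k + (|u 0| + |w 0| + |u 1| + |w 1|)
      + (Real.log d2 + Real.log d0 + Real.log d1)) := by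
    rw [hR, Real.log_rpow (by positivity)]
    rw [Real.log_mul (by positivity) (ne_of_gt hPabspos),
      Real.log_mul (ne_of_gt hk) (ne_of_gt hΓpos), hΓexp, Real.log_exp,
      hdfact, Real.log_mul (by positivity) (ne_of_gt hd1pos),
      Real.log_mul (ne_of_gt hd2pos) (ne_of_gt hd0pos)]
  have hsumt : Real.log T0 + Real.log T1 + Real.log T2
      = Real.log k + (|u 0| + |w 0| + |u 1| + |w 1|) := by
    rw [hT0, hT1, hT2, Real.log_div (ne_of_gt hRpos) (ne_of_gt hd0pos),
      Real.log_div (ne_of_gt hRpos) (ne_of_gt hd1pos),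
      Real.log_div (ne_of_gt hRpos) (ne_of_gt hd2pos), hlogR]
    ring
  -- apply the shift lemma
  obtain ⟨m, n, hm0, hm1, hm2⟩ := aux_exists_int_shift (u 0) (u 1) (u 2) (w 0) (w 1) (w 2)
    x0 x1 x2 (Real.log T0) (Real.log T1) (Real.log T2) husum hwsum hdetne
    (by linarith [hsumx, hsumt])
  refine ⟨η₁ ^ m * η₂ ^ n, ?_, ?_⟩
  · exact Subgroup.mul_mem _
      (Subgroup.zpow_mem _ (Subgroup.subset_closure (by simp)) m)
      (Subgroup.zpow_mem _ (Subgroup.subset_closure (by simp)) n)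
  · set ζ : K := ξ * (((η₁ ^ m * η₂ ^ n : (𝓞 K)ˣ) : 𝓞 K) : K) with hζ
    have hεne : (((η₁ ^ m * η₂ ^ n : (𝓞 K)ˣ) : 𝓞 K) : K) ≠ 0 :=
      RingOfIntegers.coe_ne_zero_iff.mpr (Units.ne_zero _)
    have hζne : ζ ≠ 0 := mul_ne_zero hξne hεne
    have hZlog : ∀ i : Fin 3, Real.log |φ i ζ|
        = Real.log |φ i ξ| + ((m:ℝ) * u i + (n:ℝ) * w i) := by
      intro i
      rw [hζ, map_mul, abs_mul,
        Real.log_mul (ne_of_gt (habspos i _ hξne)) (ne_of_gt (habspos i _ hεne)), hlogp]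
    have hZ0 : |φ 0 ζ| ≤ T0 := by
      rw [← Real.exp_log (habspos 0 _ hζne), ← Real.exp_log hT0pos]
      apply Real.exp_le_exp.mpr
      rw [hZlog 0]; rw [← hx0] ; linarith [hm0]
    have hZ1 : |φ 1 ζ| ≤ T1 := by
      rw [← Real.exp_log (habspos 1 _ hζne), ← Real.exp_log hT1pos]
      apply Real.exp_le_exp.mpr
      rw [hZlog 1]; rw [← hx1] ; linarith [hm1]
    have hZ2 : |φ 2 ζ| ≤ T2 := by
      rw [← Real.exp_log (habspos 2 _ hζne), ← Real.exp_log hT2pos]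
      apply Real.exp_le_exp.mpr
      rw [hZlog 2]; rw [← hx2] ; linarith [hm2]
    -- Cramer
    set ca : ℝ := ((b.repr ζ 0 : ℚ) : ℝ) with hca
    set cb : ℝ := ((b.repr ζ 1 : ℚ) : ℝ) with hcb
    set cc : ℝ := ((b.repr ζ 2 : ℚ) : ℝ) with hcc
    set Z0 : ℝ := φ 0 ζ with hZ0'
    set Z1 : ℝ := φ 1 ζ with hZ1'
    set Z2 : ℝ := φ 2 ζ with hZ2'
    have hrepr := b.sum_repr ζ
    rw [Fin.sum_univ_three] at hrepr
    have heq : ∀ i : Fin 3, ca + cb * A i + cc * A i ^ 2 = φ i ζ := by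
      intro i
      have h := congrArg (φ i) hrepr
      have hsm : ∀ (q : ℚ) (v : K), φ i (q • v) = (q : ℝ) * φ i v := by
        intro q v; rw [Rat.smul_def, map_mul, map_ratCast]
      rw [map_add, map_add, hsm, hsm, hsm, hb 0, hb 1, hb 2] at h
      simp only [Fin.val_zero, Fin.val_one, Fin.val_two, pow_zero, pow_one, map_one,
        map_pow, mul_one] at h
      simp only [hA]
      rw [hca, hcb, hcc]
      linear_combination h
    have he0 : ca + cb * A 0 + cc * A 0 ^ 2 = Z0 := heq 0
    have he1 : ca + cb * A 1 + cc * A 1 ^ 2 = Z1 := heq 1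
    have he2 : ca + cb * A 2 + cc * A 2 ^ 2 = Z2 := heq 2
    have hC : cc * P = Z0 * (A 2 - A 1) + Z1 * (A 0 - A 2) + Z2 * (A 1 - A 0) := by
      rw [hP]
      linear_combination (A 2 - A 1) * he0 + (A 0 - A 2) * he1 + (A 1 - A 0) * he2
    have hbound : |cc| * |P| ≤ 3 * R := by
      rw [← abs_mul, hC]
      calc |Z0 * (A 2 - A 1) + Z1 * (A 0 - A 2) + Z2 * (A 1 - A 0)|
          ≤ |Z0 * (A 2 - A 1)| + |Z1 * (A 0 - A 2)| + |Z2 * (A 1 - A 0)| :=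
            abs_add_three _ _ _
        _ = |Z0| * d0 + |Z1| * d1 + |Z2| * d2 := by
            rw [abs_mul, abs_mul, abs_mul, hd0, hd1, hd2,
              abs_sub_comm (A 2) (A 1), abs_sub_comm (A 1) (A 0)]
        _ ≤ T0 * d0 + T1 * d1 + T2 * d2 := by
            gcongr
        _ = 3 * R := by
            rw [hT0, hT1, hT2, div_mul_cancel₀ _ (ne_of_gt hd0pos),
              div_mul_cancel₀ _ (ne_of_gt hd1pos), div_mul_cancel₀ _ (ne_of_gt hd2pos)]
            ring
    have hfinal : |cc| ≤ 3 * R / |P| :=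
      (le_div_iff₀ hPabspos).mpr hbound
    have hkey : R / |P| = (k * Γ / Δℝ) ^ ((1:ℝ)/3) := by
      have hΔeq : Δℝ = |P| ^ (2:ℕ) := by rw [← hP2, sq_abs]
      have hfrac : k * Γ / Δℝ = (k * Γ * |P|) / |P| ^ (3:ℕ) := by
        rw [hΔeq, show ((|P|:ℝ) ^ (3:ℕ)) = |P| ^ (2:ℕ) * |P| from by ring,
          mul_div_mul_right _ _ (ne_of_gt hPabspos)]
      rw [hfrac, Real.div_rpow (by positivity) (by positivity), ← hR]
      congr 1
      rw [← Real.rpow_natCast |P| 3, ← Real.rpow_mul (abs_nonneg P)]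
      norm_num
    calc |cc| ≤ 3 * R / |P| := hfinal
      _ = 3 * (R / |P|) := by ring
      _ = 3 * (k * Γ / Δℝ) ^ ((1:ℝ)/3) := by rw [hkey]
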